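/- Let M be an admissible matroid on J of rank d + 1, S = S(M) the associated ranked symplectic matroid, and c a Minkowski weight of dimension d on the Bergman fan of S. If σ₁ = (F₁ ⊊ … ⊊ F_d) and σ₂ = (G₁ ⊊ … ⊊ G_d) are maximal chains of L(S) ∖ {∅, J} with F_{d−1} = G_{d−1} and F_d ∩ (G_d)* ≠ ∅, then c(σ₁) = c(σ₂). -/

import Mathlib

open Set Matroid
open scoped Matroid

open scoped Classical

/-- The ground set `J = [n] ⊔ [n]*`: `Sum.inl` is `[n]`, `Sum.inr` is `[n]*`. -/
abbrev J (n : ℕ) := Fin n ⊕ Fin n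

/-- The fixed-point-free involution `a ↦ a*` on `J n`. -/
def sstar {n : ℕ} (a : J n) : J n := Sum.swap a

/-- `A* = {a* : a ∈ A}`. -/
def starSet {n : ℕ} (A : Set (J n)) : Set (J n) := sstar '' A

/-- `A` is admissible if `A ∩ A* = ∅`. -/
def Admissible {n : ℕ} (A : Set (J n)) : Prop := A ∩ starSet A = ∅

/-- `A` is totally inadmissible if `A* = A`. -/
def TotallyInadmissible {n : ℕ} (A : Set (J n)) : Prop := starSet A = A

/-- The rank of a set in a matroid (on a finite ground type). -/
noncomputable def Matroid.rSet {α : Type*} (M : Matroid α) (A : Set α) : ℕ :=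
  sSup {k : ℕ | ∃ I, M.Indep I ∧ I ⊆ A ∧ I.ncard = k}

/-- The rank of a matroid. -/
noncomputable def Matroid.rnk {α : Type*} (M : Matroid α) : ℕ := M.rSet M.E

/-- A loopless matroid: every singleton of the ground set is independent. -/
def Matroid.LooplessM {α : Type*} (M : Matroid α) : Prop := ∀ a ∈ M.E, M.Indep {a}

/-- `I^ad M`: the independent sets of `M` whose closure is admissible. -/
def Iad {n : ℕ} (M : Matroid (J n)) : Set (Set (J n)) :=
  {I | M.Indep I ∧ Admissible (M.closure I)}

/-- An admissible matroid on `J n`. -/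
def IsAdmissibleMatroid {n : ℕ} (M : Matroid (J n)) : Prop :=
  M.E = Set.univ ∧ M.LooplessM ∧
    ∀ A : Set (J n),
      M.rSet A = sSup {v : ℕ | ∃ I : Set (J n), M.Indep I ∧ Admissible I ∧ I ⊆ A ∧
        v = if ∃ a, a ∈ A ∧ sstar a ∈ A ∧ (I ∪ {a}) ∈ Iad M ∧ (I ∪ {sstar a}) ∈ Iad M
            then I.ncard + 2 else I.ncard}

/-- Strongly admissible sets with respect to `M`. -/
inductive StronglyAdmissible {n : ℕ} (M : Matroid (J n)) : Set (J n) → Prop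
  | empty : StronglyAdmissible M ∅
  | insert {B : Set (J n)} {a : J n} : StronglyAdmissible M B →
      a ∉ M.closure B → sstar a ∉ M.closure B → StronglyAdmissible M (Insert.insert a B)

/-- The Möbius function of a finite poset, valued in `ℤ`. -/
noncomputable def mob {α : Type*} [PartialOrder α] [Fintype α] (x y : α) : ℤ :=
  letI : DecidableEq α := Classical.decEq α
  letI : @DecidableRel α α (· < ·) := Classical.decRel _
  letI : @DecidableRel α α (· ≤ ·) := Classical.decRel _
  letI := Fintype.toLocallyFiniteOrder (α := α)
  IncidenceAlgebra.mu ℤ x y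

/-- The lattice of flats of the ranked symplectic matroid associated to `M`:
admissible flats of `M` together with the ground set as top element. -/
abbrev LS {n : ℕ} (M : Matroid (J n)) :=
  {F : Set (J n) // (M.IsFlat F ∧ Admissible F) ∨ F = M.E}

/-- The Möbius number `μ(S(M))` of the lattice of flats of the ranked symplectic matroid. -/
noncomputable def muS {n : ℕ} (M : Matroid (J n)) : ℤ :=
  if h : M.IsFlat ∅ ∧ Admissible (∅ : Set (J n)) then
    mob (⟨∅, Or.inl h⟩ : LS M) ⟨M.E, Or.inr rfl⟩
  else 0

/-- The Möbius function of the lattice of flats of `M`. -/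
noncomputable def muFlats {n : ℕ} (M : Matroid (J n)) (F G : Set (J n)) : ℤ :=
  if h : M.IsFlat F ∧ M.IsFlat G then
    mob (⟨F, h.1⟩ : {X : Set (J n) // M.IsFlat X}) ⟨G, h.2⟩
  else 0

/-- Matroid deletion. -/
def Matroid.del {α : Type*} (M : Matroid α) (D : Set α) : Matroid α := M ↾ (M.E \ D)

/-- Matroid contraction, via the dual. -/
def Matroid.con {α : Type*} (M : Matroid α) (C : Set α) : Matroid α := (M✶ ↾ (M✶.E \ C))✶

/-- A circuit: a minimal dependent subset of the ground set. -/
def Matroid.Circuit' {α : Type*} (M : Matroid α) (C : Set α) : Prop :=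
  C ⊆ M.E ∧ ¬ M.Indep C ∧ ∀ D, D ⊂ C → M.Indep D

/-- Connectedness of a matroid: nonempty ground set and any two elements lie
in a common circuit. -/
def Matroid.ConnectedM {α : Type*} (M : Matroid α) : Prop :=
  M.E.Nonempty ∧ ∀ a ∈ M.E, ∀ b ∈ M.E, a = b ∨ ∃ C, M.Circuit' C ∧ a ∈ C ∧ b ∈ C

/-- The 0/1-indicator vector of `B ⊆ J` in `ℝ^J`. -/
noncomputable def indic {n : ℕ} (B : Set (J n)) : J n → ℝ := fun a => if a ∈ B then 1 else 0

/-- The enveloping map `env : ℝ^J → ℝ^n`, `(env x)_i = x_i - x_{i*}`. -/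
def envMap {n : ℕ} (x : J n → ℝ) : Fin n → ℝ := fun i => x (Sum.inl i) - x (Sum.inr i)

/-- `e±_A ∈ ℝ^n`: `+1` on coordinates `i ∈ A`, `-1` on coordinates with `i* ∈ A`, `0` otherwise. -/
noncomputable def epm {n : ℕ} (A : Set (J n)) : Fin n → ℝ := envMap (indic A)

/-- The matroid polytope `P(S(M))` of the ranked symplectic matroid of `M`. -/
noncomputable def PolyS {n : ℕ} (M : Matroid (J n)) : Set (Fin n → ℝ) :=
  convexHull ℝ (epm '' {B | M.IsBase B ∧ Admissible B})

/-- The support of the Bergman fan of the ranked symplectic matroid of `M`. -/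
def Berg {n : ℕ} (M : Matroid (J n)) : Set (Fin n → ℝ) :=
  {ω | ∃ C : Finset (Set (J n)),
    (∀ F ∈ C, M.IsFlat F ∧ Admissible F ∧ F ≠ ∅) ∧
    (∀ F ∈ C, ∀ G ∈ C, F ⊆ G ∨ G ⊆ F) ∧
    ∃ a : Set (J n) → ℝ, (∀ F, 0 ≤ a F) ∧ ω = ∑ F ∈ C, a F • epm F}

/-- A maximal chain `F₁ ⊊ ⋯ ⊊ F_d` of proper flats of the lattice of flats of `S(M)`,
where `rank_M (F i) = i + 1`. -/
def IsFlagChain {n : ℕ} (M : Matroid (J n)) (d : ℕ) (F : Fin d → Set (J n)) : Prop :=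
  (∀ i, M.IsFlat (F i) ∧ Admissible (F i) ∧ M.rSet (F i) = (i : ℕ) + 1) ∧
    ∀ i j : Fin d, i < j → F i ⊂ F j

/-- A Minkowski weight of dimension `d` on the Bergman fan of `S(M)`. -/
def IsMinkowskiWeight {n : ℕ} (M : Matroid (J n)) (d : ℕ)
    (c : (Fin d → Set (J n)) → ℤ) : Prop :=
  ∀ (σ : Fin d → Set (J n)) (k : Fin d), IsFlagChain M d σ →
    (∑ G ∈ Finset.univ.filter
        (fun G : Set (J n) => IsFlagChain M d (Function.update σ k G)),
        (c (Function.update σ k G) : ℝ) • epm G)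
      ∈ Submodule.span ℝ {v : Fin n → ℝ | ∃ i : Fin d, i ≠ k ∧ v = epm (σ i)}

/-- The top (rank `d`) flat of a maximal chain. -/
def chainTop {n d : ℕ} (σ : Fin d → Set (J n)) : Set (J n) := ⋃ i, σ i


section RankTools

variable {α : Type*} [Finite α] {M : Matroid α} {A B F G I X Y : Set α} {e x : α}

lemma rSet_bddAbove (M : Matroid α) (A : Set α) :
    BddAbove {k : ℕ | ∃ I, M.Indep I ∧ I ⊆ A ∧ I.ncard = k} := by
  refine ⟨Nat.card α, ?_⟩
  rintro k ⟨I, -, -, rfl⟩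
  have := Set.ncard_le_ncard (Set.subset_univ I) Set.finite_univ
  simpa [Set.ncard_univ] using this

lemma ncard_le_rSet (hI : M.Indep I) (hIA : I ⊆ A) : I.ncard ≤ M.rSet A :=
  le_csSup (rSet_bddAbove M A) ⟨I, hI, hIA, rfl⟩

lemma rSet_basis' (hI : M.IsBasis' I A) : M.rSet A = I.ncard := by
  refine le_antisymm (csSup_le ⟨0, ∅, M.empty_indep, Set.empty_subset _, Set.ncard_empty α⟩ ?_)
    (ncard_le_rSet hI.indep hI.subset)
  rintro k ⟨J, hJ, hJA, rfl⟩
  obtain ⟨J', hJ', hJJ'⟩ := hJ.subset_isBasis'_of_subset hJA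
  have h1 : J'.encard = I.encard := hJ'.encard_eq_encard hI
  have h2 : J.ncard ≤ J'.ncard := Set.ncard_le_ncard hJJ' J'.toFinite
  have h1' : J'.ncard = I.ncard := by rw [Set.ncard_def, h1, ← Set.ncard_def]
  omega

lemma rSet_basis (hI : M.IsBasis I A) : M.rSet A = I.ncard := rSet_basis' hI.isBasis'

lemma rSet_indep (hI : M.Indep I) : M.rSet I = I.ncard := rSet_basis hI.isBasis_self

lemma rSet_mono (M : Matroid α) (h : A ⊆ B) : M.rSet A ≤ M.rSet B := by
  obtain ⟨I, hI⟩ := M.exists_isBasis' A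
  rw [rSet_basis' hI]
  exact ncard_le_rSet hI.indep (hI.subset.trans h)

lemma rSet_closure (M : Matroid α) (hA : A ⊆ M.E) : M.rSet (M.closure A) = M.rSet A := by
  obtain ⟨I, hI⟩ := M.exists_isBasis A hA
  rw [rSet_basis hI, rSet_basis hI.isBasis_closure_right]

@[simp] lemma rSet_empty (M : Matroid α) : M.rSet (∅ : Set α) = 0 := by
  simpa using rSet_indep M.empty_indep

omit [Finite α] in
lemma closure_flat' (M : Matroid α) (X : Set α) : M.IsFlat (M.closure X) := by
  refine ⟨fun I Y hI hIY => ?_, M.closure_subset_ground X⟩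
  have h1 : M.closure I = M.closure X := by
    rw [hI.closure_eq_closure, Matroid.closure_closure]
  exact hIY.subset_closure.trans h1.le

omit [Finite α] in
lemma flat_inter (hF : M.IsFlat F) (hG : M.IsFlat G) : M.IsFlat (F ∩ G) := by
  have h : M.closure (F ∩ G) = F ∩ G := by
    refine subset_antisymm (Set.subset_inter ?_ ?_)
      (M.subset_closure _ ((Set.inter_subset_left).trans hF.subset_ground))
    · exact (M.closure_subset_closure Set.inter_subset_left).trans hF.closure.le
    · exact (M.closure_subset_closure Set.inter_subset_right).trans hG.closure.le
  rw [← h]; exact closure_flat' M _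

lemma flat_eq_of_rSet_le (hF : M.IsFlat F) (hG : M.IsFlat G) (hFG : F ⊆ G)
    (hr : M.rSet G ≤ M.rSet F) : F = G := by
  obtain ⟨I, hI⟩ := M.exists_isBasis F hF.subset_ground
  obtain ⟨J, hJ, hIJ⟩ := hI.indep.subset_isBasis_of_subset (hI.subset.trans hFG) hG.subset_ground
  have hcard : J.ncard ≤ I.ncard := by rw [← rSet_basis hI, ← rSet_basis hJ]; exact hr
  have hIJ' : I = J := Set.eq_of_subset_of_ncard_le hIJ hcard J.toFinite
  calc F = M.closure I := by rw [hI.closure_eq_closure, hF.closure]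
  _ = M.closure J := by rw [hIJ']
  _ = G := by rw [hJ.closure_eq_closure, hG.closure]

lemma rSet_lt_of_flat_ssubset (hF : M.IsFlat F) (hG : M.IsFlat G) (hFG : F ⊂ G) :
    M.rSet F < M.rSet G := by
  rcases lt_or_ge (M.rSet F) (M.rSet G) with h | h
  · exact h
  · exact absurd (flat_eq_of_rSet_le hF hG hFG.subset h) hFG.ne

lemma flat_nonempty_of_rSet_pos (hr : 0 < M.rSet F) : F.Nonempty := by
  rcases F.eq_empty_or_nonempty with rfl | h
  · simp at hr
  · exact h

lemma rSet_submod (M : Matroid α) (X Y : Set α) :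
    M.rSet (X ∩ Y) + M.rSet (X ∪ Y) ≤ M.rSet X + M.rSet Y := by
  obtain ⟨I, hI⟩ := M.exists_isBasis' (X ∩ Y)
  obtain ⟨J, hJ, hIJ⟩ := hI.indep.subset_isBasis'_of_subset (hI.subset.trans Set.inter_subset_left |>.trans Set.subset_union_left)
  have hJXY : J ⊆ X ∪ Y := hJ.subset
  have hIeq : I = J ∩ (X ∩ Y) := by
    refine hI.eq_of_subset_indep (hJ.indep.subset Set.inter_subset_left)
      (Set.subset_inter hIJ hI.subset) Set.inter_subset_right
  have hXle : (J ∩ X).ncard ≤ M.rSet X :=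
    ncard_le_rSet (hJ.indep.subset Set.inter_subset_left) Set.inter_subset_right
  have hYle : (J ∩ Y).ncard ≤ M.rSet Y :=
    ncard_le_rSet (hJ.indep.subset Set.inter_subset_left) Set.inter_subset_right
  have hu : (J ∩ X) ∪ (J ∩ Y) = J := by
    rw [← Set.inter_union_distrib_left]; exact Set.inter_eq_left.2 hJXY
  have hi : (J ∩ X) ∩ (J ∩ Y) = I := by
    rw [hIeq]; ext a; simp [Set.mem_inter_iff]; tauto
  have hcount := Set.ncard_union_add_ncard_inter (J ∩ X) (J ∩ Y) (Set.toFinite _) (Set.toFinite _)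
  rw [hu, hi] at hcount
  have hadd : (J ∩ X).ncard + (J ∩ Y).ncard ≤ M.rSet X + M.rSet Y := add_le_add hXle hYle
  rw [← hcount] at hadd
  rw [rSet_basis' hJ, rSet_basis' hI]
  omega

lemma rSet_insert_le (M : Matroid α) (y : α) (A : Set α) :
    M.rSet (insert y A) ≤ M.rSet A + 1 := by
  obtain ⟨J, hJ⟩ := M.exists_isBasis' (insert y A)
  rw [rSet_basis' hJ]
  have h1 : (J \ {y}).ncard ≤ M.rSet A := by
    refine ncard_le_rSet (hJ.indep.diff _) ?_
    intro x hx
    rcases hJ.subset hx.1 with h | h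
    · exact absurd h hx.2
    · exact h
  have h2 : J.ncard ≤ (J \ {y}).ncard + 1 := by
    by_cases hy : y ∈ J
    · rw [Set.ncard_diff_singleton_add_one hy J.toFinite]
    · rw [Set.diff_singleton_eq_self hy]; omega
  omega

lemma flat_ssubset_of_rSet_lt (hFG : F ⊆ G) (hr : M.rSet F < M.rSet G) : F ⊂ G := by
  refine hFG.ssubset_of_ne fun h => ?_
  rw [h] at hr; omega

/-- Between two nested flats there is a flat of any intermediate rank. -/
lemma interFlat (hW : M.IsFlat F) (hX : M.IsFlat X) (hWX : F ⊆ X) (m : ℕ)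
    (h1 : M.rSet F ≤ m) (h2 : m ≤ M.rSet X) :
    ∃ Z, M.IsFlat Z ∧ F ⊆ Z ∧ Z ⊆ X ∧ M.rSet Z = m := by
  obtain ⟨I, hI⟩ := M.exists_isBasis F hW.subset_ground
  obtain ⟨I', hI', hII'⟩ := hI.indep.subset_isBasis_of_subset (hI.subset.trans hWX)
    hX.subset_ground
  have hc1 : I.ncard ≤ m := by rw [← rSet_basis hI]; exact h1
  have hc2 : m ≤ I'.ncard := by rw [← rSet_basis hI']; exact h2
  obtain ⟨K, hIK, hKI', hK⟩ := Set.exists_subsuperset_card_eq hII' hc1 hc2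
  have hKind : M.Indep K := hI'.indep.subset hKI'
  refine ⟨M.closure K, closure_flat' M K, ?_, ?_, ?_⟩
  · calc F = M.closure I := by rw [hI.closure_eq_closure, hW.closure]
    _ ⊆ M.closure K := M.closure_subset_closure hIK
  · calc M.closure K ⊆ M.closure I' := M.closure_subset_closure hKI'
    _ = X := by rw [hI'.closure_eq_closure, hX.closure]
  · rw [rSet_closure M (hKind.subset_ground), rSet_indep hKind, hK]

lemma closure_empty_flat (M : Matroid α) : M.IsFlat (M.closure ∅) := closure_flat' M ∅

omit [Finite α] in
lemma closure_empty_subset_flat (hF : M.IsFlat F) : M.closure ∅ ⊆ F := by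
  have := M.closure_subset_closure (Set.empty_subset F)
  rwa [hF.closure] at this

lemma rSet_closure_empty (M : Matroid α) : M.rSet (M.closure ∅) = 0 := by
  rw [rSet_closure M (Set.empty_subset _), rSet_empty]

/-- Fill in a full chain of flats below a flat `F` of rank `m`. -/
lemma descChain (M : Matroid α) : ∀ (m : ℕ) (F : Set α), M.IsFlat F → M.rSet F = m →
    ∃ g : ℕ → Set α, g m = F ∧ (∀ i, i ≤ m → M.IsFlat (g i) ∧ M.rSet (g i) = i ∧ g i ⊆ F) ∧
      (∀ i, i + 1 ≤ m → g i ⊂ g (i + 1)) := by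
  intro m
  induction m with
  | zero =>
    intro F hF hr
    exact ⟨fun _ => F, rfl, fun i hi => by
      interval_cases i; exact ⟨hF, hr, le_refl F⟩, fun i hi => by omega⟩
  | succ m ih =>
    intro F hF hr
    obtain ⟨Z, hZ, -, hZF, hrZ⟩ := interFlat (closure_empty_flat M) hF
      (closure_empty_subset_flat hF) m (by rw [rSet_closure_empty]; omega) (by omega)
    obtain ⟨g, hgm, hgall, hgmono⟩ := ih Z hZ hrZ
    refine ⟨fun i => if i = m + 1 then F else g i, by simp, fun i hi => ?_, fun i hi => ?_⟩
    · by_cases h : i = m + 1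
      · simp only [h, if_pos rfl]; exact ⟨hF, h ▸ hr, le_refl F⟩
      · have hi' : i ≤ m := by omega
        obtain ⟨h1, h2, h3⟩ := hgall i hi'
        simp only [if_neg h]
        exact ⟨h1, h2, h3.trans hZF⟩
    · show (if i = m + 1 then F else g i) ⊂ (if i + 1 = m + 1 then F else g (i + 1))
      by_cases h : i + 1 = m + 1
      · have him : i = m := by omega
        subst him
        rw [if_pos h, if_neg (by omega : ¬ i = i + 1), hgm]
        exact flat_ssubset_of_rSet_lt hZF (by rw [hrZ, hr]; omega)
      · rw [if_neg h, if_neg (by omega : ¬ i = m + 1)]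
        exact hgmono i (by omega)

end RankTools
section StarTools

variable {n : ℕ} {A B : Set (J n)} {a : J n}

@[simp] lemma sstar_sstar (a : J n) : sstar (sstar a) = a := Sum.swap_swap a

lemma mem_starSet_iff : a ∈ starSet A ↔ sstar a ∈ A := by
  constructor
  · rintro ⟨x, hx, rfl⟩; simpa using hx
  · intro h; exact ⟨sstar a, h, sstar_sstar a⟩

lemma Admissible.not_both (hA : Admissible A) (ha : a ∈ A) (ha' : sstar a ∈ A) : False := by
  have : a ∈ A ∩ starSet A := ⟨ha, mem_starSet_iff.2 ha'⟩
  rw [hA] at this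
  exact this

lemma Admissible.subset (hB : Admissible B) (hAB : A ⊆ B) : Admissible A := by
  rw [Admissible, Set.eq_empty_iff_forall_notMem]
  rintro x ⟨hx, hx'⟩
  exact hB.not_both (hAB hx) (hAB (mem_starSet_iff.1 hx'))

end StarTools

section UniqueFlat

variable {n : ℕ} {M : Matroid (J n)} {F G G' L : Set (J n)} {a : J n} {m : ℕ}

/-- A flat of rank `m+1` containing a flat `L` of rank `m` and a point `a ∉ L` is unique. -/
lemma flat_unique (hG : M.IsFlat G) (hG' : M.IsFlat G') (hrG : M.rSet G = m + 1)
    (hrG' : M.rSet G' = m + 1) (hL : M.IsFlat L) (hrL : M.rSet L = m)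
    (hLG : L ⊆ G) (hLG' : L ⊆ G') (haG : a ∈ G) (haG' : a ∈ G') (haL : a ∉ L) : G = G' := by
  have haE : a ∈ M.E := hG.subset_ground haG
  have hiE : insert a L ⊆ M.E := Set.insert_subset haE hL.subset_ground
  set Z := M.closure (insert a L) with hZdef
  have hZ : M.IsFlat Z := closure_flat' M _
  have hLZ : L ⊂ Z := by
    refine ⟨(Set.subset_insert a L).trans (M.subset_closure _ hiE), fun hsub => haL ?_⟩
    exact hsub (M.subset_closure _ hiE (Set.mem_insert a L))
  have hrZ : M.rSet Z = m + 1 := by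
    have h1 : M.rSet Z ≤ m + 1 := by
      rw [hZdef, rSet_closure M hiE]
      have := rSet_insert_le M a L
      omega
    have h2 : m < M.rSet Z := by
      have := rSet_lt_of_flat_ssubset hL hZ hLZ
      omega
    omega
  have key : ∀ W, M.IsFlat W → M.rSet W = m + 1 → L ⊆ W → a ∈ W → W = Z := by
    intro W hW hrW hLW haW
    have hZW : Z ⊆ W := by
      have : M.closure (insert a L) ⊆ M.closure W :=
        M.closure_subset_closure (Set.insert_subset haW hLW)
      rwa [hW.closure] at this
    exact (flat_eq_of_rSet_le hZ hW hZW (by omega)).symm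
  rw [key G hG hrG hLG haG, key G' hG' hrG' hLG' haG']

end UniqueFlat

section Phi

variable {n : ℕ}

/-- The coordinate functional associated to an element of `J n`. -/
noncomputable def jphi : J n → ((Fin n → ℝ) →ₗ[ℝ] ℝ)
  | Sum.inl i => LinearMap.proj i
  | Sum.inr i => -LinearMap.proj i

lemma jphi_epm (a : J n) (B : Set (J n)) :
    jphi a (epm B) = (if a ∈ B then (1 : ℝ) else 0) - (if sstar a ∈ B then (1 : ℝ) else 0) := by
  cases a with
  | inl i =>
    show epm B i = _
    simp [epm, envMap, indic, sstar]
    split_ifs <;> simp_all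
  | inr i =>
    show -(epm B i) = _
    simp only [epm, envMap, indic, sstar, Sum.swap_inr]
    split_ifs <;> simp_all

end Phi

section Key

variable {n d : ℕ} {M : Matroid (J n)} {c : (Fin d → Set (J n)) → ℤ}

lemma key_balance (hc : IsMinkowskiWeight M d c) (σ : Fin d → Set (J n)) (k : Fin d)
    (hσ : IsFlagChain M d σ) (G₁ G₂ : Set (J n))
    (h1 : IsFlagChain M d (Function.update σ k G₁))
    (h2 : IsFlagChain M d (Function.update σ k G₂))
    (a b : J n) (r : ℝ) (hr : r ≠ 0)
    (hG : ∀ G, IsFlagChain M d (Function.update σ k G) →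
      ((if a ∈ G then (1 : ℝ) else 0) - (if sstar a ∈ G then (1 : ℝ) else 0))
        - ((if b ∈ G then (1 : ℝ) else 0) - (if sstar b ∈ G then (1 : ℝ) else 0))
      = r * ((if G = G₁ then (1 : ℝ) else 0) - (if G = G₂ then (1 : ℝ) else 0)))
    (hab : ∀ i : Fin d, i ≠ k →
      ((if a ∈ σ i then (1 : ℝ) else 0) - (if sstar a ∈ σ i then (1 : ℝ) else 0))
      = ((if b ∈ σ i then (1 : ℝ) else 0) - (if sstar b ∈ σ i then (1 : ℝ) else 0))) :
    c (Function.update σ k G₁) = c (Function.update σ k G₂) := by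
  classical
  set ψ : (Fin n → ℝ) →ₗ[ℝ] ℝ := jphi a - jphi b with hψdef
  have hmem := hc σ k hσ
  have hker : Submodule.span ℝ {v : Fin n → ℝ | ∃ i : Fin d, i ≠ k ∧ v = epm (σ i)}
      ≤ LinearMap.ker ψ := by
    rw [Submodule.span_le]
    rintro v ⟨i, hik, rfl⟩
    simp only [SetLike.mem_coe, LinearMap.mem_ker, hψdef, LinearMap.sub_apply,
      jphi_epm, hab i hik, sub_self]
  have hzero : ψ (∑ G ∈ Finset.univ.filter
      (fun G : Set (J n) => IsFlagChain M d (Function.update σ k G)),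
      (c (Function.update σ k G) : ℝ) • epm G) = 0 := hker hmem
  rw [map_sum] at hzero
  set s := Finset.univ.filter (fun G : Set (J n) => IsFlagChain M d (Function.update σ k G))
    with hsdef
  have hs1 : G₁ ∈ s := Finset.mem_filter.2 ⟨Finset.mem_univ _, h1⟩
  have hs2 : G₂ ∈ s := Finset.mem_filter.2 ⟨Finset.mem_univ _, h2⟩
  have hterm : ∀ G ∈ s, ψ ((c (Function.update σ k G) : ℝ) • epm G)
      = r * ((if G = G₁ then (c (Function.update σ k G) : ℝ) else 0)
        - (if G = G₂ then (c (Function.update σ k G) : ℝ) else 0)) := by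
    intro G hGs
    have hGfc : IsFlagChain M d (Function.update σ k G) := (Finset.mem_filter.1 hGs).2
    rw [map_smul, smul_eq_mul, hψdef, LinearMap.sub_apply, jphi_epm, jphi_epm, hG G hGfc]
    split_ifs <;> ring
  rw [Finset.sum_congr rfl hterm, ← Finset.mul_sum, Finset.sum_sub_distrib,
    Finset.sum_ite_eq' s G₁ (fun G => (c (Function.update σ k G) : ℝ)),
    Finset.sum_ite_eq' s G₂ (fun G => (c (Function.update σ k G) : ℝ)),
    if_pos hs1, if_pos hs2] at hzero
  have := mul_eq_zero.1 hzero
  rcases this with h | h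
  · exact absurd h hr
  · have := sub_eq_zero.1 h
    exact_mod_cast this

end Key
section Chains

variable {n d : ℕ} {M : Matroid (J n)} {σ : Fin d → Set (J n)} {G : Set (J n)}
  {c : (Fin d → Set (J n)) → ℤ}

lemma fc_flat (hσ : IsFlagChain M d σ) (i : Fin d) : M.IsFlat (σ i) := (hσ.1 i).1

lemma fc_adm (hσ : IsFlagChain M d σ) (i : Fin d) : Admissible (σ i) := (hσ.1 i).2.1

lemma fc_rank (hσ : IsFlagChain M d σ) (i : Fin d) : M.rSet (σ i) = (i : ℕ) + 1 :=
  (hσ.1 i).2.2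

lemma fc_mono (hσ : IsFlagChain M d σ) {i j : Fin d} (h : i ≤ j) : σ i ⊆ σ j := by
  rcases eq_or_lt_of_le h with h' | h'
  · rw [h']
  · exact (hσ.2 i j h').subset

lemma update_fc_props (k : Fin d) (hG : IsFlagChain M d (Function.update σ k G)) :
    M.IsFlat G ∧ Admissible G ∧ M.rSet G = (k : ℕ) + 1 := by
  have := hG.1 k
  rwa [Function.update_self] at this

lemma update_fc_above (k : Fin d) (hG : IsFlagChain M d (Function.update σ k G))
    {j : Fin d} (hkj : k < j) : G ⊂ σ j := by
  have := hG.2 k j hkj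
  rwa [Function.update_self, Function.update_of_ne (Ne.symm (ne_of_lt hkj))] at this

lemma update_fc_below (k : Fin d) (hG : IsFlagChain M d (Function.update σ k G))
    {j : Fin d} (hjk : j < k) : σ j ⊂ G := by
  have := hG.2 j k hjk
  rwa [Function.update_self, Function.update_of_ne (ne_of_lt hjk)] at this

lemma chainFloor (hσ : IsFlagChain M d σ) (k : Fin d) :
    ∃ L, M.IsFlat L ∧ M.rSet L = (k : ℕ) ∧
      (∀ G', IsFlagChain M d (Function.update σ k G') → L ⊆ G') ∧
      (∀ i : Fin d, (i : ℕ) < (k : ℕ) → σ i ⊆ L) := by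
  by_cases hk : (k : ℕ) = 0
  · refine ⟨M.closure ∅, closure_empty_flat M, by rw [rSet_closure_empty, hk],
      fun G' hG' => closure_empty_subset_flat (update_fc_props k hG').1,
      fun i hi => by omega⟩
  · have hk1 : (k : ℕ) - 1 < d := by have := k.isLt; omega
    set k' : Fin d := ⟨(k : ℕ) - 1, hk1⟩ with hk'def
    have hk'k : k' < k := by rw [Fin.lt_def]; simp [hk'def]; omega
    refine ⟨σ k', fc_flat hσ k', by rw [fc_rank hσ k']; simp [hk'def]; omega,
      fun G' hG' => (update_fc_below k hG' hk'k).subset,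
      fun i hi => fc_mono hσ (by rw [Fin.le_def]; simp [hk'def]; omega)⟩

lemma update_self_fc (hσ : IsFlagChain M d σ) (k : Fin d) :
    IsFlagChain M d (Function.update σ k (σ k)) := by
  rw [Function.update_eq_self]; exact hσ

/-- Exchanging a non-top flat of a maximal chain does not change the weight. -/
lemma exchange_mid (hc : IsMinkowskiWeight M d c) (hσ : IsFlagChain M d σ) (k : Fin d)
    (hk : (k : ℕ) + 1 < d) (G : Set (J n)) (hG : IsFlagChain M d (Function.update σ k G)) :
    c σ = c (Function.update σ k G) := by
  set k1 : Fin d := ⟨(k : ℕ) + 1, hk⟩ with hk1def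
  have hkk1 : k < k1 := by rw [Fin.lt_def]; simp [hk1def]
  obtain ⟨L, hL, hrL, hLsub, hσL⟩ := chainFloor hσ k
  have hself := update_self_fc hσ k
  have hadm1 : Admissible (σ k1) := fc_adm hσ k1
  -- generic properties of members of the filter
  have hprops : ∀ G'', IsFlagChain M d (Function.update σ k G'') →
      M.IsFlat G'' ∧ M.rSet G'' = (k : ℕ) + 1 ∧ L ⊆ G'' ∧ G'' ⊆ σ k1 := by
    intro G'' hG''
    obtain ⟨hf, -, hr⟩ := update_fc_props k hG''
    exact ⟨hf, hr, hLsub G'' hG'', (update_fc_above k hG'' hkk1).subset⟩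
  have hLk : L ⊂ σ k := flat_ssubset_of_rSet_lt (hprops _ hself).2.2.1
    (by rw [hrL, fc_rank hσ k]; omega)
  obtain ⟨a, hak, haL⟩ := Set.exists_of_ssubset hLk
  have hLG : L ⊂ G := flat_ssubset_of_rSet_lt (hprops G hG).2.2.1
    (by rw [hrL, (hprops G hG).2.1]; omega)
  obtain ⟨b, hbG, hbL⟩ := Set.exists_of_ssubset hLG
  have hak1 : a ∈ σ k1 := (hσ.2 k k1 hkk1).subset hak
  have hbk1 : b ∈ σ k1 := (hprops G hG).2.2.2 hbG
  -- membership characterization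
  have hchar : ∀ x, x ∈ σ k1 → ∀ G'', IsFlagChain M d (Function.update σ k G'') →
      sstar x ∉ G'' := by
    intro x hx G'' hG'' hmem
    exact hadm1.not_both hx ((hprops G'' hG'').2.2.2 hmem)
  have huniq : ∀ x W, x ∈ W → x ∉ L → M.IsFlat W → M.rSet W = (k : ℕ) + 1 → L ⊆ W →
      ∀ G'', IsFlagChain M d (Function.update σ k G'') → x ∈ G'' → G'' = W := by
    intro x W hxW hxL hW hrW hLW G'' hG'' hxG''
    obtain ⟨hf, hr, hLsub'', -⟩ := hprops G'' hG''
    exact flat_unique hf hW hr hrW hL hrL hLsub'' hLW hxG'' hxW hxL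
  -- coordinate values on the fixed part of the chain
  have hcoord : ∀ x, x ∈ σ k1 → x ∉ L → ∀ i : Fin d, i ≠ k →
      ((if x ∈ σ i then (1 : ℝ) else 0) - (if sstar x ∈ σ i then (1 : ℝ) else 0))
      = (if (k : ℕ) < (i : ℕ) then 1 else 0) := by
    intro x hx hxL i hik
    have hik' : (i : ℕ) ≠ (k : ℕ) := fun h => hik (Fin.ext h)
    rcases lt_or_gt_of_ne hik' with h | h
    · have hiL : σ i ⊆ L := hσL i h
      have hLk1 : L ⊆ σ k1 := hLk.subset.trans (hσ.2 k k1 hkk1).subset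
      rw [if_neg (by omega : ¬ (k : ℕ) < (i : ℕ)), if_neg (fun hmem => hxL (hiL hmem)),
        if_neg (fun hmem => hadm1.not_both hx (hLk1 (hiL hmem)))]
      ring
    · have hsub : σ k1 ⊆ σ i := fc_mono hσ (by rw [Fin.le_def]; simp [hk1def]; omega)
      rw [if_pos h, if_pos (hsub hx),
        if_neg (fun hmem => (fc_adm hσ i).not_both (hsub hx) hmem)]
      ring
  -- apply the balancing relation
  have hkey := key_balance hc σ k hσ (σ k) G hself hG a b 1 one_ne_zero ?_ ?_
  · rwa [Function.update_eq_self] at hkey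
  · intro G'' hG''
    have ha' : (if a ∈ G'' then (1 : ℝ) else 0) = (if G'' = σ k then 1 else 0) := by
      by_cases hmem : a ∈ G''
      · rw [if_pos hmem, if_pos (huniq a (σ k) hak haL (fc_flat hσ k) (fc_rank hσ k)
          hLk.subset G'' hG'' hmem)]
      · rw [if_neg hmem, if_neg (by rintro rfl; exact hmem hak)]
    have hb' : (if b ∈ G'' then (1 : ℝ) else 0) = (if G'' = G then 1 else 0) := by
      by_cases hmem : b ∈ G''
      · rw [if_pos hmem, if_pos (huniq b G hbG hbL (hprops G hG).1 (hprops G hG).2.1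
          (hprops G hG).2.2.1 G'' hG'' hmem)]
      · rw [if_neg hmem, if_neg (by rintro rfl; exact hmem hbG)]
    rw [ha', hb', if_neg (hchar a hak1 G'' hG''), if_neg (hchar b hbk1 G'' hG'')]
    ring
  · intro i hik
    rw [hcoord a hak1 haL i hik, hcoord b hbk1 hbL i hik]

/-- Exchanging the top flat: the symplectic exchange. -/
lemma exchange_top (hc : IsMinkowskiWeight M d c) {σ' : Fin d → Set (J n)}
    (hσ : IsFlagChain M d σ) (hσ' : IsFlagChain M d σ') (t : Fin d)
    (ht : (t : ℕ) + 1 = d)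
    (hsub : ∀ i : Fin d, i ≠ t → σ i ⊂ σ' t)
    {a : J n} (ha : a ∈ σ t) (hb : sstar a ∈ σ' t) :
    IsFlagChain M d (Function.update σ t (σ' t)) ∧ c σ = c (Function.update σ t (σ' t)) := by
  have hself := update_self_fc hσ t
  have hadmt : Admissible (σ t) := fc_adm hσ t
  have hadmt' : Admissible (σ' t) := fc_adm hσ' t
  -- the updated chain is a flag chain
  have hupd : IsFlagChain M d (Function.update σ t (σ' t)) := by
    constructor
    · intro i
      by_cases h : i = t
      · rw [h, Function.update_self]
        exact hσ'.1 t
      · rw [Function.update_of_ne h]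
        exact hσ.1 i
    · intro i j hij
      have hjti : i ≠ t := by
        intro h; subst h
        have := j.isLt; rw [Fin.lt_def] at hij; omega
      rw [Function.update_of_ne hjti]
      by_cases h : j = t
      · rw [h, Function.update_self]
        exact hsub i hjti
      · rw [Function.update_of_ne h]
        exact hσ.2 i j hij
  obtain ⟨L, hL, hrL, hLsub, hσL⟩ := chainFloor hσ t
  have hLt : L ⊆ σ t := hLsub (σ t) hself
  have hLt' : L ⊆ σ' t := hLsub (σ' t) hupd
  have haL : a ∉ L := fun h => hadmt'.not_both (hLt' h) hb
  have hbL : sstar a ∉ L := fun h => hadmt.not_both ha (hLt h)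
  have huniq : ∀ x W, x ∈ W → x ∉ L → M.IsFlat W → M.rSet W = (t : ℕ) + 1 → L ⊆ W →
      ∀ G'', IsFlagChain M d (Function.update σ t G'') → x ∈ G'' → G'' = W := by
    intro x W hxW hxL hW hrW hLW G'' hG'' hxG''
    obtain ⟨hf, -, hr⟩ := update_fc_props t hG''
    exact flat_unique hf hW hr hrW hL hrL (hLsub G'' hG'') hLW hxG'' hxW hxL
  have hstar : ∀ G'', IsFlagChain M d (Function.update σ t G'') →
      (a ∈ G'' ↔ G'' = σ t) ∧ (sstar a ∈ G'' ↔ G'' = σ' t) := by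
    intro G'' hG''
    constructor
    · constructor
      · exact fun h => huniq a (σ t) ha haL (fc_flat hσ t) (fc_rank hσ t) hLt G'' hG'' h
      · rintro rfl; exact ha
    · constructor
      · exact fun h => huniq (sstar a) (σ' t) hb hbL (fc_flat hσ' t) (fc_rank hσ' t)
          hLt' G'' hG'' h
      · rintro rfl; exact hb
  have htt' : σ t ≠ σ' t := fun h => hadmt'.not_both (h ▸ ha) hb
  have hkey := key_balance hc σ t hσ (σ t) (σ' t) hself hupd a (sstar a) 2 two_ne_zero ?_ ?_
  · rw [Function.update_eq_self] at hkey
    exact ⟨hupd, hkey⟩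
  · intro G'' hG''
    obtain ⟨h1, h2⟩ := hstar G'' hG''
    have e1 : (if a ∈ G'' then (1 : ℝ) else 0) = (if G'' = σ t then 1 else 0) := by
      by_cases h : a ∈ G''
      · rw [if_pos h, if_pos (h1.1 h)]
      · rw [if_neg h, if_neg (fun hh => h (h1.2 hh))]
    have e2 : (if sstar a ∈ G'' then (1 : ℝ) else 0) = (if G'' = σ' t then 1 else 0) := by
      by_cases h : sstar a ∈ G''
      · rw [if_pos h, if_pos (h2.1 h)]
      · rw [if_neg h, if_neg (fun hh => h (h2.2 hh))]
    rw [sstar_sstar, e1, e2]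
    ring
  · intro i hit
    have hsub' : σ i ⊆ σ' t := (hsub i hit).subset
    have hsubt : σ i ⊆ σ t := by
      have hit' : (i : ℕ) ≠ (t : ℕ) := fun h => hit (Fin.ext h)
      exact fc_mono hσ (by rw [Fin.le_def]; have := i.isLt; omega)
    rw [sstar_sstar, if_neg (fun h : a ∈ σ i => hadmt'.not_both (hsub' h) hb),
      if_neg (fun h : sstar a ∈ σ i => hadmt.not_both ha (hsubt h))]

end Chains
section Gallery

variable {n d : ℕ} {M : Matroid (J n)} {σ : Fin d → Set (J n)}
  {c : (Fin d → Set (J n)) → ℤ}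

/-- Fill in a flag chain below a given flat `Z` of rank `j`, keeping positions `≥ j`. -/
lemma fill_below (hσ : IsFlagChain M d σ) (j : Fin d) (Z : Set (J n)) (hZ : M.IsFlat Z)
    (hrZ : M.rSet Z = (j : ℕ)) (hZs : Z ⊂ σ j) :
    ∃ τ : Fin d → Set (J n), IsFlagChain M d τ ∧
      (∀ i : Fin d, (j : ℕ) ≤ (i : ℕ) → τ i = σ i) ∧
      (∀ i : Fin d, (i : ℕ) < (j : ℕ) → τ i ⊆ Z) := by
  obtain ⟨g, hgm, hgall, hgmono⟩ := descChain M (j : ℕ) Z hZ hrZ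
  have gmono : ∀ p q : ℕ, p < q → q ≤ (j : ℕ) → g p ⊂ g q := by
    intro p q
    induction q with
    | zero => omega
    | succ q ih =>
      intro hpq hq
      rcases Nat.lt_succ_iff_lt_or_eq.1 hpq with h | h
      · exact (ih h (by omega)).trans (hgmono q hq)
      · rw [h]; exact hgmono q hq
  refine ⟨fun i => if (i : ℕ) < (j : ℕ) then g ((i : ℕ) + 1) else σ i, ⟨fun i => ?_, ?_⟩,
    fun i hi => if_neg (by omega : ¬ (i : ℕ) < (j : ℕ)), fun i hi => ?_⟩
  · by_cases h : (i : ℕ) < (j : ℕ)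
    · simp only [if_pos h]
      obtain ⟨h1, h2, h3⟩ := hgall ((i : ℕ) + 1) (by omega)
      exact ⟨h1, (fc_adm hσ j).subset (h3.trans hZs.subset), h2⟩
    · simp only [if_neg h]
      exact hσ.1 i
  · intro i i' hii'
    have hv : (i : ℕ) < (i' : ℕ) := hii'
    show (if (i : ℕ) < (j : ℕ) then g ((i : ℕ) + 1) else σ i)
      ⊂ (if (i' : ℕ) < (j : ℕ) then g ((i' : ℕ) + 1) else σ i')
    by_cases h' : (i' : ℕ) < (j : ℕ)
    · rw [if_pos (by omega), if_pos h']
      exact gmono _ _ (by omega) (by omega)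
    · rw [if_neg h']
      by_cases h : (i : ℕ) < (j : ℕ)
      · rw [if_pos h]
        have h3 : g ((i : ℕ) + 1) ⊆ Z := (hgall _ (by omega)).2.2
        have hjle : σ j ⊆ σ i' := fc_mono hσ (by rw [Fin.le_def]; omega)
        exact h3.trans_ssubset (hZs.trans_subset hjle)
      · rw [if_neg h]
        exact hσ.2 i i' hii'
  · show (if (i : ℕ) < (j : ℕ) then g ((i : ℕ) + 1) else σ i) ⊆ Z
    rw [if_pos hi]
    exact (hgall _ (by omega)).2.2

/-- Weights agree on flag chains that agree above a level. -/
lemma gallery (hc : IsMinkowskiWeight M d c) :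
    ∀ j : ℕ, j < d → ∀ σ σ' : Fin d → Set (J n), IsFlagChain M d σ → IsFlagChain M d σ' →
      (∀ i : Fin d, j ≤ (i : ℕ) → σ i = σ' i) → c σ = c σ' := by
  intro j
  induction j with
  | zero =>
    intro _ σ σ' _ _ hag
    congr 1
    exact funext fun i => hag i (Nat.zero_le _)
  | succ j ihj =>
    intro hjd
    have hj : j < d := by omega
    set jF : Fin d := ⟨j, hj⟩ with hjFdef
    set jF1 : Fin d := ⟨j + 1, hjd⟩ with hjF1def
    have hjFv : (jF : ℕ) = j := by rw [hjFdef]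
    have hjF1v : (jF1 : ℕ) = j + 1 := by rw [hjF1def]
    have hjlt : jF < jF1 := by rw [Fin.lt_def, hjFv, hjF1v]; omega
    suffices h : ∀ q : ℕ, ∀ σ σ' : Fin d → Set (J n), IsFlagChain M d σ → IsFlagChain M d σ' →
        (∀ i : Fin d, j + 1 ≤ (i : ℕ) → σ i = σ' i) →
        j + 1 ≤ q + M.rSet (σ jF ∩ σ' jF) → c σ = c σ' by
      intro σ σ' h1 h2 hag
      exact h (j + 1) σ σ' h1 h2 hag (by omega)
    intro q
    induction q with
    | zero =>
      intro σ σ' h1 h2 hag hq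
      have hflX := fc_flat h1 jF
      have hflY := fc_flat h2 jF
      have e1 : σ jF ∩ σ' jF = σ jF :=
        flat_eq_of_rSet_le (flat_inter hflX hflY) hflX Set.inter_subset_left
          (by rw [fc_rank h1 jF, hjFv]; omega)
      have hsub : σ jF ⊆ σ' jF := by rw [← e1]; exact Set.inter_subset_right
      have hXY : σ jF = σ' jF := flat_eq_of_rSet_le hflX hflY hsub
        (by rw [fc_rank h1 jF, fc_rank h2 jF])
      refine ihj hj σ σ' h1 h2 fun i hi => ?_
      by_cases h : (i : ℕ) = j
      · have : i = jF := Fin.ext (by rw [hjFv]; exact h)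
        rw [this, hXY]
      · exact hag i (by omega)
    | succ q ihq =>
      intro σ σ' h1 h2 hag hq
      have hflX := fc_flat h1 jF
      have hflY := fc_flat h2 jF
      by_cases hXY : σ jF = σ' jF
      · refine ihj hj σ σ' h1 h2 fun i hi => ?_
        by_cases h : (i : ℕ) = j
        · have : i = jF := Fin.ext (by rw [hjFv]; exact h)
          rw [this, hXY]
        · exact hag i (by omega)
      -- main construction step
      set X := σ jF with hXdef
      set Y := σ' jF with hYdef
      set S := σ jF1 with hSdef
      have hSeq : σ' jF1 = S := (hag jF1 hjF1v.ge).symm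
      have hflS := fc_flat h1 jF1
      have hrX : M.rSet X = j + 1 := by rw [hXdef, fc_rank h1 jF, hjFv]
      have hrY : M.rSet Y = j + 1 := by rw [hYdef, fc_rank h2 jF, hjFv]
      have hrS : M.rSet S = j + 2 := by rw [hSdef, fc_rank h1 jF1, hjF1v]
      have hXS : X ⊂ S := h1.2 jF jF1 hjlt
      have hYS : Y ⊂ S := hSeq ▸ h2.2 jF jF1 hjlt
      set W := X ∩ Y with hWdef
      have hflW : M.IsFlat W := flat_inter hflX hflY
      have hWX : W ⊂ X := by
        refine Set.inter_subset_left.ssubset_of_ne fun h => hXY ?_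
        have hs : X ⊆ Y := by rw [← h]; exact Set.inter_subset_right
        exact flat_eq_of_rSet_le hflX hflY hs (by omega)
      have hrW : M.rSet W ≤ j := by
        have := rSet_lt_of_flat_ssubset hflW hflX hWX
        omega
      obtain ⟨y, hyY, hyX⟩ := Set.not_subset.1 fun hs =>
        hXY (flat_eq_of_rSet_le hflY hflX hs (by omega)).symm
      obtain ⟨Z, hflZ, hWZ, hZX, hrZ⟩ := interFlat hflW hflX Set.inter_subset_left j hrW
        (by omega)
      have hZXs : Z ⊂ X := flat_ssubset_of_rSet_lt (M := M) hZX (by omega)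
      obtain ⟨τ, hτfc, hτag, hτbelow⟩ := fill_below h1 jF Z hflZ (by rw [hjFv]; exact hrZ)
        hZXs
      -- the new top candidate
      have hyE : y ∈ M.E := hflY.subset_ground hyY
      have hins : insert y Z ⊆ M.E := Set.insert_subset hyE hflZ.subset_ground
      set X1 := M.closure (insert y Z) with hX1def
      have hflX1 : M.IsFlat X1 := closure_flat' M _
      have hZX1 : Z ⊂ X1 := by
        refine ⟨(Set.subset_insert y Z).trans (M.subset_closure _ hins), fun hsub => ?_⟩
        exact hyX (hZX (hsub (M.subset_closure _ hins (Set.mem_insert y Z))))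
      have hrX1 : M.rSet X1 = j + 1 := by
        have hle : M.rSet X1 ≤ j + 1 := by
          rw [hX1def, rSet_closure M hins]
          have := rSet_insert_le M y Z
          omega
        have hlt := rSet_lt_of_flat_ssubset hflZ hflX1 hZX1
        omega
      have hX1S : X1 ⊂ S := by
        have hsub : X1 ⊆ S := by
          have h' : insert y Z ⊆ S := Set.insert_subset (hYS.subset hyY)
            (hZX.trans hXS.subset)
          have := M.closure_subset_closure h'
          rwa [hflS.closure] at this
        exact flat_ssubset_of_rSet_lt (M := M) hsub (by omega)
      have hadmX1 : Admissible X1 := (fc_adm h1 jF1).subset hX1S.subset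
      -- step 1 : c σ = c τ
      have step1 : c σ = c τ := ihj hj σ τ h1 hτfc fun i hi => (hτag i hi).symm
      -- step 2 : exchange position j
      have hupd : IsFlagChain M d (Function.update τ jF X1) := by
        constructor
        · intro i
          by_cases h : i = jF
          · rw [h, Function.update_self]
            exact ⟨hflX1, hadmX1, by rw [hrX1, hjFv]⟩
          · rw [Function.update_of_ne h]
            exact hτfc.1 i
        · intro i i' hii'
          have hv : (i : ℕ) < (i' : ℕ) := hii'
          by_cases h' : i' = jF
          · have hij : (i : ℕ) < j := by rw [h'] at hv; rwa [hjFv] at hv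
            rw [h', Function.update_self, Function.update_of_ne (by
              intro hh; rw [hh, hjFv] at hij; omega)]
            exact (hτbelow i hij).trans_ssubset hZX1
          · rw [Function.update_of_ne h']
            by_cases h : i = jF
            · rw [h, Function.update_self]
              have hji' : (jF1 : ℕ) ≤ (i' : ℕ) := by
                rw [h, hjFv] at hv; omega
              have : σ jF1 ⊆ σ i' := fc_mono h1 (by rw [Fin.le_def]; exact hji')
              have hτi' : τ i' = σ i' := hτag i' (by omega)
              rw [hτi']
              exact hX1S.trans_subset this
            · rw [Function.update_of_ne h]
              exact hτfc.2 i i' hii'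
      have step2 : c τ = c (Function.update τ jF X1) :=
        exchange_mid hc hτfc jF (by rw [hjFv]; omega) X1 hupd
      -- step 3 : recurse
      have hag2 : ∀ i : Fin d, j + 1 ≤ (i : ℕ) → (Function.update τ jF X1) i = σ' i := by
        intro i hi
        rw [Function.update_of_ne (by intro hh; rw [hh, hjFv] at hi; omega),
          hτag i (by omega)]
        exact hag i hi
      have hrank2 : j + 1 ≤ q + M.rSet ((Function.update τ jF X1) jF ∩ Y) := by
        rw [Function.update_self]
        have hVsub : M.closure (insert y W) ⊆ X1 ∩ Y := by
          have h' : insert y W ⊆ X1 ∩ Y := Set.insert_subset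
            ⟨(M.subset_closure _ hins) (Set.mem_insert y Z), hyY⟩
            (Set.subset_inter (hWZ.trans hZX1.subset) Set.inter_subset_right)
          have := M.closure_subset_closure h'
          rwa [(flat_inter hflX1 hflY).closure] at this
        have hWV : W ⊂ M.closure (insert y W) := by
          have hinsW : insert y W ⊆ M.E := Set.insert_subset hyE hflW.subset_ground
          refine ⟨(Set.subset_insert y W).trans (M.subset_closure _ hinsW), fun hsub => ?_⟩
          exact hyX (Set.inter_subset_left
            (hsub (M.subset_closure _ hinsW (Set.mem_insert y W))))
        have h1' := rSet_lt_of_flat_ssubset hflW (closure_flat' M _) hWV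
        have h2' := rSet_mono M hVsub
        omega
      rw [step1, step2]
      exact ihq (Function.update τ jF X1) σ' hupd h2 hag2 hrank2

end Gallery
theorem stmt_16 (n : ℕ) (hn : 1 ≤ n) (M : Matroid (J n)) (hM : IsAdmissibleMatroid M)
    (d : ℕ) (hrk : M.rnk = d + 1) (c : (Fin d → Set (J n)) → ℤ)
    (hc : IsMinkowskiWeight M d c)
    (σ₁ σ₂ : Fin d → Set (J n)) (h₁ : IsFlagChain M d σ₁) (h₂ : IsFlagChain M d σ₂)
    (hpen : ∀ i : Fin d, (i : ℕ) + 2 = d → σ₁ i = σ₂ i)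
    (hmeet : ∀ i : Fin d, (i : ℕ) + 1 = d → (σ₁ i ∩ starSet (σ₂ i)).Nonempty) :
    c σ₁ = c σ₂ := by
  rcases Nat.eq_zero_or_pos d with rfl | hd
  · congr 1
    exact funext fun i => i.elim0
  · have htlt : d - 1 < d := by omega
    set t : Fin d := ⟨d - 1, htlt⟩ with htdef
    have htv : (t : ℕ) = d - 1 := by rw [htdef]
    have ht : (t : ℕ) + 1 = d := by rw [htv]; omega
    obtain ⟨a, ha1, ha2⟩ := hmeet t ht
    have hb : sstar a ∈ σ₂ t := mem_starSet_iff.1 ha2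
    have hsub : ∀ i : Fin d, i ≠ t → σ₁ i ⊂ σ₂ t := by
      intro i hit
      have hiv : (i : ℕ) ≠ d - 1 := fun h => hit (Fin.ext (by rw [h, htv]))
      have hi' : (i : ℕ) < d - 1 := by have := i.isLt; omega
      have hd2 : 2 ≤ d := by omega
      have hplt : d - 2 < d := by omega
      set p : Fin d := ⟨d - 2, hplt⟩ with hpdef
      have hpv : (p : ℕ) = d - 2 := by rw [hpdef]
      have hpen' : σ₁ p = σ₂ p := hpen p (by rw [hpv]; omega)
      have h1p : σ₁ i ⊆ σ₁ p := fc_mono h₁ (by rw [Fin.le_def, hpv]; omega)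
      have hpt : p < t := by rw [Fin.lt_def, hpv, htv]; omega
      have h2p : σ₁ i ⊆ σ₂ p := hpen' ▸ h1p
      exact h2p.trans_ssubset (h₂.2 p t hpt)
    obtain ⟨hupd, step1⟩ := exchange_top hc h₁ h₂ t ht hsub ha1 hb
    have step2 : c (Function.update σ₁ t (σ₂ t)) = c σ₂ := by
      refine gallery hc (d - 1) (by omega) _ σ₂ hupd h₂ fun i hi => ?_
      have hieq : i = t := Fin.ext (by rw [htv]; have := i.isLt; omega)
      rw [hieq, Function.update_self]
    rw [step1, step2]
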